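/- Over an algebraically closed field of characteristic 2, there are exactly two restricted structures on the 3-dimensional Heisenberg Lie algebra up to restricted isomorphism, given by the linear forms θ = 0 and θ = z*. -/

import Mathlib

/-- The 2-map on the 3-dimensional Heisenberg algebra in characteristic 2 determined
by a linear form `θ`: `(a x + b y + c z)^{[2]} = (a²θ(x) + b²θ(y) + c²θ(z) + ab) z`. -/
noncomputable def heisTwoMap {F h : Type*} [Field F] [LieRing h] [LieAlgebra F h]
    (B : Module.Basis (Fin 3) F h) (θ : h →ₗ[F] F) : h → h :=
  fun v => (B.repr v 0 ^ 2 * θ (B 0) + B.repr v 1 ^ 2 * θ (B 1) + B.repr v 2 ^ 2 * θ (B 2)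
      + B.repr v 0 * B.repr v 1) • B 2

/-- Restricted isomorphism of `(h, θ)` and `(h, θ')` in characteristic 2. -/
noncomputable def HeisRIso2 {F h : Type*} [Field F] [LieRing h] [LieAlgebra F h]
    (B : Module.Basis (Fin 3) F h) (θ θ' : h →ₗ[F] F) : Prop :=
  ∃ φ : h ≃ₗ[F] h, (∀ u v : h, φ ⁅u, v⁆ = ⁅φ u, φ v⁆) ∧
    ∀ v : h, φ (heisTwoMap B θ v) = heisTwoMap B θ' (φ v)

section HeisAux

variable {F h : Type*} [Field F] [LieRing h] [LieAlgebra F h] (B : Module.Basis (Fin 3) F h)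

lemma heisRepr_eq (v : h) :
    v = B.repr v 0 • B 0 + B.repr v 1 • B 1 + B.repr v 2 • B 2 := by
  have := B.sum_repr v
  rw [Fin.sum_univ_three] at this
  exact this.symm

lemma heisRepr_combo (p q r : F) (i : Fin 3) :
    B.repr (p • B 0 + q • B 1 + r • B 2) i = ![p, q, r] i := by
  simp only [map_add, map_smul, B.repr_self, Finsupp.coe_add, Finsupp.coe_smul,
    Pi.add_apply, Pi.smul_apply, smul_eq_mul]
  fin_cases i <;> simp [Finsupp.single_apply]

lemma heisBracket_eq (hxy : ⁅B 0, B 1⁆ = B 2) (hxz : ⁅B 0, B 2⁆ = 0) (hyz : ⁅B 1, B 2⁆ = 0)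
    (u v : h) : ⁅u, v⁆ = (B.repr u 0 * B.repr v 1 - B.repr u 1 * B.repr v 0) • B 2 := by
  have h10 : ⁅B 1, B 0⁆ = -B 2 := by rw [← lie_skew, hxy]
  have h20 : ⁅B 2, B 0⁆ = 0 := by rw [← lie_skew, hxz, neg_zero]
  have h21 : ⁅B 2, B 1⁆ = 0 := by rw [← lie_skew, hyz, neg_zero]
  conv_lhs => rw [heisRepr_eq B u, heisRepr_eq B v]
  simp only [add_lie, lie_add, smul_lie, lie_smul, lie_self, hxy, hxz, hyz, h10, h20, h21,
    smul_zero, add_zero, zero_add, smul_neg]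
  module

lemma heisTwoMap_eq (θ : h →ₗ[F] F) (v : h) :
    heisTwoMap B θ v = (B.repr v 0 ^ 2 * θ (B 0) + B.repr v 1 ^ 2 * θ (B 1)
      + B.repr v 2 ^ 2 * θ (B 2) + B.repr v 0 * B.repr v 1) • B 2 := rfl

/-- Case `θ(z) ≠ 0`: restricted iso from `θ` to `z*`. -/
lemma heisCase_ne (hF2 : (2 : F) = 0) (hxy : ⁅B 0, B 1⁆ = B 2) (hxz : ⁅B 0, B 2⁆ = 0)
    (hyz : ⁅B 1, B 2⁆ = 0) (θ : h →ₗ[F] F) (s t : F)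
    (hs : s ^ 2 = θ (B 2) * θ (B 0)) (ht : t ^ 2 = θ (B 2) * θ (B 1))
    (hγ : θ (B 2) ≠ 0) : HeisRIso2 B θ (B.coord 2) := by
  set γ := θ (B 2) with hγdef
  set f : h →ₗ[F] h := B.constr F ![B 0 + s • B 2, γ • B 1 + t • B 2, γ • B 2] with hf
  set g : h →ₗ[F] h :=
    B.constr F ![B 0 - (s / γ) • B 2, γ⁻¹ • B 1 - (t / γ ^ 2) • B 2, γ⁻¹ • B 2] with hg
  have hfg : f ∘ₗ g = LinearMap.id := by
    apply B.ext; intro i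
    fin_cases i <;>
    · simp only [Fin.zero_eta, Fin.mk_one, Fin.reduceFinMk, LinearMap.comp_apply,
        LinearMap.id_apply, hf, hg, Module.Basis.constr_basis, map_add, map_sub, map_smul,
        Matrix.cons_val_zero, Matrix.cons_val_one, Matrix.head_cons, Matrix.cons_val_two,
        Matrix.tail_cons]
      match_scalars <;> field_simp <;> ring
  have hgf : g ∘ₗ f = LinearMap.id := by
    apply B.ext; intro i
    fin_cases i <;>
    · simp only [Fin.zero_eta, Fin.mk_one, Fin.reduceFinMk, LinearMap.comp_apply,
        LinearMap.id_apply, hf, hg, Module.Basis.constr_basis, map_add, map_sub, map_smul,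
        Matrix.cons_val_zero, Matrix.cons_val_one, Matrix.head_cons, Matrix.cons_val_two,
        Matrix.tail_cons]
      match_scalars <;> field_simp <;> ring
  set φ : h ≃ₗ[F] h := LinearEquiv.ofLinear f g hfg hgf with hφ
  have φapp : ∀ w : h, φ w = B.repr w 0 • B 0 + (γ * B.repr w 1) • B 1
      + (s * B.repr w 0 + t * B.repr w 1 + γ * B.repr w 2) • B 2 := by
    intro w
    conv_lhs => rw [heisRepr_eq B w]
    simp only [hφ, LinearEquiv.ofLinear_apply, hf, map_add, map_smul, Module.Basis.constr_basis,
      Matrix.cons_val_zero, Matrix.cons_val_one, Matrix.head_cons, Matrix.cons_val_two,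
      Matrix.tail_cons]
    module
  have hφ2 : φ (B 2) = γ • B 2 := by
    simp [hφ, LinearEquiv.ofLinear_apply, hf, Module.Basis.constr_basis]
  refine ⟨φ, ?_, ?_⟩
  · intro u v
    rw [heisBracket_eq B hxy hxz hyz u v, heisBracket_eq B hxy hxz hyz (φ u) (φ v),
      map_smul, hφ2, φapp u, φapp v]
    simp only [heisRepr_combo, Matrix.cons_val_zero, Matrix.cons_val_one, Matrix.head_cons,
      Matrix.cons_val_two, Matrix.tail_cons]
    (try (match_scalars <;> ring))
  · intro v
    rw [heisTwoMap_eq B θ v, map_smul, hφ2, φapp v, heisTwoMap_eq]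
    simp only [heisRepr_combo, Matrix.cons_val_zero, Matrix.cons_val_one, Matrix.head_cons,
      Matrix.cons_val_two, Matrix.tail_cons, Module.Basis.coord_apply, Module.Basis.repr_self,
      Finsupp.single_apply, Fin.isValue, Fin.reduceEq, reduceIte, mul_zero, mul_one,
      zero_add, add_zero]
    rw [smul_smul]
    congr 1
    linear_combination (-(B.repr v 0 ^ 2)) * hs + (-(B.repr v 1 ^ 2)) * ht
      + (-(s * B.repr v 0 * t * B.repr v 1 + s * B.repr v 0 * γ * B.repr v 2
         + t * B.repr v 1 * γ * B.repr v 2)) * hF2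

/-- Case `θ(z) = 0`: restricted iso from `θ` to `0`. -/
lemma heisCase_eq (hF2 : (2 : F) = 0) (hxy : ⁅B 0, B 1⁆ = B 2) (hxz : ⁅B 0, B 2⁆ = 0)
    (hyz : ⁅B 1, B 2⁆ = 0) (θ : h →ₗ[F] F) (m : F)
    (hm : m + θ (B 0) * m ^ 2 = θ (B 1)) (hγ : θ (B 2) = 0) :
    HeisRIso2 B θ 0 := by
  set α := θ (B 0) with hα
  set f : h →ₗ[F] h :=
    B.constr F ![B 0 + α • B 1, m • B 0 + (1 + m * α) • B 1, B 2] with hf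
  set g : h →ₗ[F] h :=
    B.constr F ![(1 + m * α) • B 0 - α • B 1, -(m • B 0) + B 1, B 2] with hg
  have hfg : f ∘ₗ g = LinearMap.id := by
    apply B.ext; intro i
    fin_cases i <;>
    · simp only [Fin.zero_eta, Fin.mk_one, Fin.reduceFinMk, LinearMap.comp_apply,
        LinearMap.id_apply, hf, hg, Module.Basis.constr_basis, map_add, map_sub, map_neg, map_smul,
        Matrix.cons_val_zero, Matrix.cons_val_one, Matrix.head_cons, Matrix.cons_val_two,
        Matrix.tail_cons]
      (try (match_scalars <;> ring))
  have hgf : g ∘ₗ f = LinearMap.id := by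
    apply B.ext; intro i
    fin_cases i <;>
    · simp only [Fin.zero_eta, Fin.mk_one, Fin.reduceFinMk, LinearMap.comp_apply,
        LinearMap.id_apply, hf, hg, Module.Basis.constr_basis, map_add, map_sub, map_neg, map_smul,
        Matrix.cons_val_zero, Matrix.cons_val_one, Matrix.head_cons, Matrix.cons_val_two,
        Matrix.tail_cons]
      (try (match_scalars <;> ring))
  set φ : h ≃ₗ[F] h := LinearEquiv.ofLinear f g hfg hgf with hφ
  have φapp : ∀ w : h, φ w = (B.repr w 0 + m * B.repr w 1) • B 0
      + (α * B.repr w 0 + (1 + m * α) * B.repr w 1) • B 1 + B.repr w 2 • B 2 := by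
    intro w
    conv_lhs => rw [heisRepr_eq B w]
    simp only [hφ, LinearEquiv.ofLinear_apply, hf, map_add, map_smul, Module.Basis.constr_basis,
      Matrix.cons_val_zero, Matrix.cons_val_one, Matrix.head_cons, Matrix.cons_val_two,
      Matrix.tail_cons]
    module
  have hφ2 : φ (B 2) = B 2 := by
    simp [hφ, LinearEquiv.ofLinear_apply, hf, Module.Basis.constr_basis]
  refine ⟨φ, ?_, ?_⟩
  · intro u v
    rw [heisBracket_eq B hxy hxz hyz u v, heisBracket_eq B hxy hxz hyz (φ u) (φ v),
      map_smul, hφ2, φapp u, φapp v]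
    simp only [heisRepr_combo, Matrix.cons_val_zero, Matrix.cons_val_one, Matrix.head_cons,
      Matrix.cons_val_two, Matrix.tail_cons]
    (try (match_scalars <;> ring))
  · intro v
    rw [heisTwoMap_eq B θ v, map_smul, hφ2, φapp v, heisTwoMap_eq]
    simp only [heisRepr_combo, Matrix.cons_val_zero, Matrix.cons_val_one, Matrix.head_cons,
      Matrix.cons_val_two, Matrix.tail_cons, LinearMap.zero_apply, mul_zero, zero_add,
      add_zero, hγ]
    congr 1
    linear_combination (-(B.repr v 1 ^ 2)) * hm
      + (-(m * α * B.repr v 0 * B.repr v 1)) * hF2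

end HeisAux

/-- Over an algebraically closed field of characteristic 2 there are
exactly two restricted structures on the 3-dimensional Heisenberg Lie algebra up to
restricted isomorphism, given by the linear forms `θ = 0` and `θ = z*`. -/
theorem heisenberg_restricted_classification_char_two (F h : Type*) [Field F]
    [IsAlgClosed F] [CharP F 2]
    [LieRing h] [LieAlgebra F h] (B : Module.Basis (Fin 3) F h)
    (hxy : ⁅B 0, B 1⁆ = B 2) (hxz : ⁅B 0, B 2⁆ = 0) (hyz : ⁅B 1, B 2⁆ = 0) :
    ¬ HeisRIso2 B 0 (B.coord 2) ∧
    (∀ θ : h →ₗ[F] F, HeisRIso2 B θ 0 ∨ HeisRIso2 B θ (B.coord 2)) := by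
  have hF2 : (2 : F) = 0 := by
    have := CharP.cast_eq_zero F 2
    simpa using this
  constructor
  · rintro ⟨φ, hlie, hmap⟩
    have hd : φ (B 2) = (B.repr (φ (B 0)) 0 * B.repr (φ (B 1)) 1
        - B.repr (φ (B 0)) 1 * B.repr (φ (B 1)) 0) • B 2 := by
      have hb := heisBracket_eq B hxy hxz hyz (φ (B 0)) (φ (B 1))
      rw [← hlie, hxy] at hb
      exact hb
    set d := B.repr (φ (B 0)) 0 * B.repr (φ (B 1)) 1
        - B.repr (φ (B 0)) 1 * B.repr (φ (B 1)) 0 with hddef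
    have h0 : heisTwoMap B 0 (B 2) = 0 := by
      rw [heisTwoMap_eq]
      simp [Module.Basis.repr_self, Finsupp.single_apply]
    have h1 := hmap (B 2)
    rw [h0, map_zero, hd, heisTwoMap_eq] at h1
    simp only [map_smul, Module.Basis.coord_apply, Module.Basis.repr_self, Finsupp.smul_single,
      Finsupp.single_apply, smul_eq_mul, mul_one, Fin.isValue, Fin.reduceEq, reduceIte,
      Finsupp.coe_smul, Pi.smul_apply] at h1
    norm_num at h1
    have hd0 : d ^ 2 = 0 ∨ B 2 = 0 := smul_eq_zero.mp h1.symm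
    rcases hd0 with hd0 | hd0
    · have : d = 0 := sq_eq_zero_iff.mp hd0
      rw [this, zero_smul] at hd
      have : B 2 = 0 := by
        have h2 := φ.injective (by rw [hd, map_zero] : φ (B 2) = φ 0)
        exact h2
      exact B.ne_zero 2 this
    · exact B.ne_zero 2 hd0
  · intro θ
    by_cases hγ : θ (B 2) = 0
    · left
      by_cases hα : θ (B 0) = 0
      · exact heisCase_eq B hF2 hxy hxz hyz θ (θ (B 1)) (by rw [hα]; ring) hγ
      · obtain ⟨m, hm⟩ : ∃ m : F, (Polynomial.C (θ (B 0)) * Polynomial.X ^ 2 + Polynomial.X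
            - Polynomial.C (θ (B 1))).IsRoot m := by
          apply IsAlgClosed.exists_root
          have : (Polynomial.C (θ (B 0)) * Polynomial.X ^ 2 + Polynomial.X
              - Polynomial.C (θ (B 1))).degree = 2 := by
            compute_degree!
          rw [this]; decide
        apply heisCase_eq B hF2 hxy hxz hyz θ m ?_ hγ
        have := hm
        simp only [Polynomial.IsRoot, Polynomial.eval_sub, Polynomial.eval_add,
          Polynomial.eval_mul, Polynomial.eval_pow, Polynomial.eval_C, Polynomial.eval_X]
          at this
        linear_combination this
    · right
      obtain ⟨s, hs⟩ := IsAlgClosed.exists_pow_nat_eq (θ (B 2) * θ (B 0)) (n := 2) zero_lt_two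
      obtain ⟨t, ht⟩ := IsAlgClosed.exists_pow_nat_eq (θ (B 2) * θ (B 1)) (n := 2) zero_lt_two
      exact heisCase_ne B hF2 hxy hxz hyz θ s t hs ht hγ
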